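/- For every positive integers $n$ and $t$, there exists a set $S \subseteq \mathbb{N}$ of size $n^2$ with all elements at most $n^{O(t)}$ such that all sums of $t$ distinct elements of $S$ are distinct, i.e., $|tS| = \binom{n^2}{t}$ where $tS = \{a_1 + \cdots + a_t : a_i \in S \text{ distinct}\}$. -/

import Mathlib

open Finset

/-- Greedy construction of a `t`-wise Sidon set of any size `j ≤ m` inside
`[0, m^(2t+2))`, assuming `t ≤ m` and `2 < m`. -/
lemma greedy_sidon (m t : ℕ) (hm : 2 < m) (ht : 1 ≤ t) (htm : t ≤ m) :
    ∀ j ≤ m, ∃ S : Finset ℕ, S.card = j ∧ (∀ a ∈ S, a < m ^ (2 * t + 2)) ∧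
      ∀ T T' : Finset ℕ, T ⊆ S → T' ⊆ S → T.card = T'.card → T.card ≤ t →
        T.sum id = T'.sum id → T = T' := by
  intro j
  induction j with
  | zero =>
    intro _
    refine ⟨∅, by simp, by simp, ?_⟩
    intro T T' hT hT' _ _ _
    rw [Finset.subset_empty.mp hT, Finset.subset_empty.mp hT']
  | succ j ih =>
    intro hj
    obtain ⟨S, hcard, hbound, hgood⟩ := ih (Nat.le_of_succ_le hj)
    have hjm : j < m := Nat.lt_of_succ_le hj
    -- the forbidden set
    set F : Finset ℕ := ((Finset.range t).biUnion (fun k =>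
      ((S.powersetCard k) ×ˢ (S.powersetCard (k + 1))).image
        (fun p => p.2.sum id - p.1.sum id))) ∪ S with hFdef
    have hFcard : F.card < m ^ (2 * t + 2) := by
      have h1 : F.card ≤ (Finset.range t).sum (fun k =>
          (((S.powersetCard k) ×ˢ (S.powersetCard (k + 1))).image
            (fun p : Finset ℕ × Finset ℕ => p.2.sum id - p.1.sum id)).card) + S.card :=
        le_trans (Finset.card_union_le _ _)
          (by gcongr; exact Finset.card_biUnion_le)
      have h2 : ∀ k ∈ Finset.range t,
          (((S.powersetCard k) ×ˢ (S.powersetCard (k + 1))).image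
            (fun p : Finset ℕ × Finset ℕ => p.2.sum id - p.1.sum id)).card
            ≤ m ^ (2 * t) := by
        intro k hk
        have hk' : k + 1 ≤ t := Finset.mem_range.mp hk
        calc (((S.powersetCard k) ×ˢ (S.powersetCard (k + 1))).image
              (fun p : Finset ℕ × Finset ℕ => p.2.sum id - p.1.sum id)).card
            ≤ ((S.powersetCard k) ×ˢ (S.powersetCard (k + 1))).card :=
              Finset.card_image_le
          _ = j.choose k * j.choose (k + 1) := by
              rw [Finset.card_product, Finset.card_powersetCard,
                Finset.card_powersetCard, hcard]
          _ ≤ j ^ k * j ^ (k + 1) :=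
              Nat.mul_le_mul (Nat.choose_le_pow _ _) (Nat.choose_le_pow _ _)
          _ = j ^ (k + (k + 1)) := (pow_add _ _ _).symm
          _ ≤ m ^ (k + (k + 1)) := Nat.pow_le_pow_left hjm.le _
          _ ≤ m ^ (2 * t) := Nat.pow_le_pow_right (by omega) (by omega)
      have h3 : F.card ≤ t * m ^ (2 * t) + m := by
        refine le_trans h1 ?_
        have := Finset.sum_le_sum h2
        simp only [Finset.sum_const, Finset.card_range, smul_eq_mul] at this
        omega
      have h4 : t * m ^ (2 * t) + m < m ^ (2 * t + 2) := by
        have hmp : 1 ≤ m ^ (2 * t) := Nat.one_le_pow _ _ (by omega)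
        calc t * m ^ (2 * t) + m
            ≤ m * m ^ (2 * t) + m * m ^ (2 * t) := by
              have e1 : t * m ^ (2 * t) ≤ m * m ^ (2 * t) :=
                Nat.mul_le_mul_right _ htm
              have e2 : m ≤ m * m ^ (2 * t) := Nat.le_mul_of_pos_right _ hmp
              omega
          _ = 2 * (m * m ^ (2 * t)) := by ring
          _ < m * (m * m ^ (2 * t)) :=
              mul_lt_mul_of_pos_right hm (by positivity)
          _ = m ^ (2 * t + 2) := by ring
      omega
    -- pick a fresh element
    have hex : ∃ x ∈ Finset.range (m ^ (2 * t + 2)), x ∉ F := by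
      by_contra hcon
      push_neg at hcon
      have : Finset.range (m ^ (2 * t + 2)) ⊆ F := hcon
      have := Finset.card_le_card this
      rw [Finset.card_range] at this
      omega
    obtain ⟨x, hxR, hxF⟩ := hex
    have hxS : x ∉ S := fun h => hxF (Finset.mem_union_right _ h)
    -- key fact: certain differences are in F
    have hmemF : ∀ A B : Finset ℕ, A ⊆ S → B ⊆ S → A.card + 1 = B.card →
        B.card ≤ t → (B.sum id - A.sum id) ∈ F := by
      intro A B hA hB hAB hBt
      refine Finset.mem_union_left _ (Finset.mem_biUnion.mpr ⟨A.card, ?_, ?_⟩)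
      · exact Finset.mem_range.mpr (by omega)
      · refine Finset.mem_image.mpr ⟨(A, B), ?_, rfl⟩
        rw [Finset.mem_product]
        exact ⟨Finset.mem_powersetCard.mpr ⟨hA, rfl⟩,
          Finset.mem_powersetCard.mpr ⟨hB, hAB.symm⟩⟩
    refine ⟨insert x S, ?_, ?_, ?_⟩
    · rw [Finset.card_insert_of_notMem hxS, hcard]
    · intro a ha
      rcases Finset.mem_insert.mp ha with rfl | ha
      · exact Finset.mem_range.mp hxR
      · exact hbound a ha
    · intro T T' hT hT' hcc hct hsum
      by_cases hxT : x ∈ T <;> by_cases hxT' : x ∈ T'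
      · -- x in both: erase and use induction hypothesis
        have h1 : T.erase x ⊆ S :=
          (Finset.erase_subset_erase x hT).trans (Finset.erase_insert_subset x S)
        have h2 : T'.erase x ⊆ S :=
          (Finset.erase_subset_erase x hT').trans (Finset.erase_insert_subset x S)
        have e1 : x + (T.erase x).sum id = T.sum id := Finset.add_sum_erase _ id hxT
        have e2 : x + (T'.erase x).sum id = T'.sum id := Finset.add_sum_erase _ id hxT'
        have hsum' : (T.erase x).sum id = (T'.erase x).sum id := by omega
        have hc1 : (T.erase x).card = T.card - 1 := Finset.card_erase_of_mem hxT
        have hc2 : (T'.erase x).card = T'.card - 1 := Finset.card_erase_of_mem hxT'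
        have := hgood _ _ h1 h2 (by omega) (by omega) hsum'
        calc T = insert x (T.erase x) := (Finset.insert_erase hxT).symm
          _ = insert x (T'.erase x) := by rw [this]
          _ = T' := Finset.insert_erase hxT'
      · -- x ∈ T, x ∉ T' : contradiction, x is a forbidden difference
        exfalso
        have hT'S : T' ⊆ S := by
          intro a ha
          rcases Finset.mem_insert.mp (hT' ha) with rfl | h
          · exact absurd ha hxT'
          · exact h
        have h1 : T.erase x ⊆ S :=
          (Finset.erase_subset_erase x hT).trans (Finset.erase_insert_subset x S)
        have e1 : x + (T.erase x).sum id = T.sum id := Finset.add_sum_erase _ id hxT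
        have hc1 : (T.erase x).card = T.card - 1 := Finset.card_erase_of_mem hxT
        have hTpos : 1 ≤ T.card := Finset.card_pos.mpr ⟨x, hxT⟩
        have hx_eq : x = T'.sum id - (T.erase x).sum id := by omega
        rw [hx_eq] at hxF
        exact hxF (hmemF _ _ h1 hT'S (by omega) (by omega))
      · -- symmetric case
        exfalso
        have hTS : T ⊆ S := by
          intro a ha
          rcases Finset.mem_insert.mp (hT ha) with rfl | h
          · exact absurd ha hxT
          · exact h
        have h1 : T'.erase x ⊆ S :=
          (Finset.erase_subset_erase x hT').trans (Finset.erase_insert_subset x S)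
        have e1 : x + (T'.erase x).sum id = T'.sum id := Finset.add_sum_erase _ id hxT'
        have hc1 : (T'.erase x).card = T'.card - 1 := Finset.card_erase_of_mem hxT'
        have hTpos : 1 ≤ T'.card := Finset.card_pos.mpr ⟨x, hxT'⟩
        have hx_eq : x = T.sum id - (T'.erase x).sum id := by omega
        rw [hx_eq] at hxF
        exact hxF (hmemF _ _ h1 hTS (by omega) (by omega))
      · -- x in neither
        have hTS : T ⊆ S := by
          intro a ha
          rcases Finset.mem_insert.mp (hT ha) with rfl | h
          · exact absurd ha hxT
          · exact h
        have hT'S : T' ⊆ S := by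
          intro a ha
          rcases Finset.mem_insert.mp (hT' ha) with rfl | h
          · exact absurd ha hxT'
          · exact h
        exact hgood _ _ hTS hT'S hcc hct hsum

theorem stmt10 : ∃ C : ℕ, ∀ n t : ℕ, 0 < n → 0 < t →
    ∃ S : Finset ℕ, S.card = n ^ 2 ∧ (∀ a ∈ S, a ≤ n ^ (C * t)) ∧
      ∀ T T' : Finset ℕ, T ⊆ S → T' ⊆ S → T.card = t → T'.card = t →
        T.sum id = T'.sum id → T = T' := by
  refine ⟨8, ?_⟩
  intro n t hn ht
  rcases eq_or_lt_of_le (show 1 ≤ n from hn) with h1 | h2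
  · -- n = 1
    obtain rfl : n = 1 := by omega
    refine ⟨{0}, by simp, by simp, ?_⟩
    intro T T' hT hT' hTc hT'c _
    have e1 : T = {0} := Finset.eq_of_subset_of_card_le hT
      (by rw [Finset.card_singleton]; omega)
    have e2 : T' = {0} := Finset.eq_of_subset_of_card_le hT'
      (by rw [Finset.card_singleton]; omega)
    rw [e1, e2]
  · -- n ≥ 2
    by_cases htn : t ≤ n ^ 2
    · obtain ⟨S, hc, hb, hg⟩ := greedy_sidon (n ^ 2) t (by nlinarith) ht htn (n ^ 2) le_rfl
      refine ⟨S, hc, ?_, ?_⟩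
      · intro a ha
        have := hb a ha
        have e : (n ^ 2) ^ (2 * t + 2) = n ^ (2 * (2 * t + 2)) := by
          rw [← pow_mul]
        have e2 : n ^ (2 * (2 * t + 2)) ≤ n ^ (8 * t) :=
          Nat.pow_le_pow_right (by omega) (by omega)
        omega
      · intro T T' hT hT' hTc hT'c hsum
        exact hg T T' hT hT' (by rw [hTc, hT'c]) (by omega) hsum
    · -- t > n² : vacuous
      refine ⟨Finset.range (n ^ 2), by simp, ?_, ?_⟩
      · intro a ha
        have : a < n ^ 2 := Finset.mem_range.mp ha
        have : n ^ 2 ≤ n ^ (8 * t) := Nat.pow_le_pow_right (by omega) (by omega)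
        omega
      · intro T T' hT hT' hTc hT'c _
        exfalso
        have := Finset.card_le_card hT
        rw [hTc, Finset.card_range] at this
        omega
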